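/- arXiv:2209.01628 — 2 statements merged into one kernel-verified Lean document; each statement's English description precedes it below -/
import Mathlib

section
/- Let μ ∈ L^∞(0,1) be non-negative almost everywhere, let K(t) := ∫₀¹ μ(α) t^{-α}/Γ(1-α) dα for t > 0, and let p ∈ ℂ with Re p > 0. Then the function (t,α) ↦ e^{-pt} μ(α) t^{-α}/Γ(1-α) is absolutely integrable on (0,∞) × (0,1), and ∫₀^∞ e^{-pt} K(t) dt = ∫₀¹ μ(α) p^{α-1} dα, where p^{α-1} denotes the principal branch of the complex power. -/
open MeasureTheory Set Complex Filter Topology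

private lemma aux_int_real {s b : ℝ} (hs : -1 < s) (hb : 0 < b) :
    IntegrableOn (fun t : ℝ => t ^ s * Real.exp (-b * t)) (Ioi 0) := by
  have := integrableOn_rpow_mul_exp_neg_mul_rpow hs one_pos hb
  simpa [Real.rpow_one] using this

private lemma aux_norm {α : ℝ} {p : ℂ} {t : ℝ} (ht : 0 < t) :
    ‖Complex.exp (-p * t) * (t : ℂ) ^ (-(α : ℂ))‖ = t ^ (-α) * Real.exp (-p.re * t) := by
  rw [norm_mul, Complex.norm_exp,
    Complex.norm_cpow_eq_rpow_re_of_pos ht]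
  have h1 : (-p * (t : ℂ)).re = -p.re * t := by simp
  have h2 : (-(α : ℂ)).re = -α := by simp
  rw [h1, h2, mul_comm]

private lemma aux_aesm (α : ℝ) (x : ℂ) :
    AEStronglyMeasurable (fun t : ℝ => Complex.exp (-x * t) * (t : ℂ) ^ (-(α : ℂ)))
      (volume.restrict (Ioi 0)) := by
  apply ContinuousOn.aestronglyMeasurable _ measurableSet_Ioi
  intro t ht
  apply ContinuousWithinAt.mul
  · exact ((Complex.continuous_exp.comp
      (continuous_const.mul Complex.continuous_ofReal)).continuousAt).continuousWithinAt
  · exact ((continuousAt_cpow_const (Complex.ofReal_mem_slitPlane.2 ht)).comp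
      Complex.continuous_ofReal.continuousAt).continuousWithinAt

private lemma aux_intC {α : ℝ} (h1 : α < 1) {p : ℂ} (hp : 0 < p.re) :
    IntegrableOn (fun t : ℝ => Complex.exp (-p * t) * (t : ℂ) ^ (-(α : ℂ))) (Ioi 0) := by
  refine Integrable.mono' (aux_int_real (s := -α) (by linarith) hp) (aux_aesm α p) ?_
  rw [ae_restrict_iff' measurableSet_Ioi]
  filter_upwards with t ht
  rw [aux_norm ht]

private lemma key_laplace {α : ℝ} (h0 : 0 < α) (h1 : α < 1) {p : ℂ} (hp : 0 < p.re) :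
    ∫ t in Ioi (0 : ℝ), Complex.exp (-p * t) * (t : ℂ) ^ (-(α : ℂ))
      = Complex.Gamma (1 - α) * p ^ ((α : ℂ) - 1) := by
  set f : ℂ → ℂ := fun z => ∫ t in Ioi (0 : ℝ), Complex.exp (-z * t) * (t : ℂ) ^ (-(α : ℂ))
    with hf
  set g : ℂ → ℂ := fun z => Complex.Gamma (1 - α) * z ^ ((α : ℂ) - 1) with hg
  have hUopen : IsOpen {z : ℂ | 0 < z.re} := isOpen_lt continuous_const Complex.continuous_re
  have hUconn : IsPreconnected {z : ℂ | 0 < z.re} := (convex_halfSpace_re_gt 0).isPreconnected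
  -- differentiability of f
  have hfd : DifferentiableOn ℂ f {z : ℂ | 0 < z.re} := by
    intro z hz
    have hz' : 0 < z.re := hz
    have hε0 : 0 < z.re / 2 := by positivity
    have H := hasDerivAt_integral_of_dominated_loc_of_deriv_le (𝕜 := ℂ)
      (μ := volume.restrict (Ioi 0))
      (F := fun w (t : ℝ) => Complex.exp (-w * t) * (t : ℂ) ^ (-(α : ℂ)))
      (F' := fun w (t : ℝ) => -(t : ℂ) * (Complex.exp (-w * t) * (t : ℂ) ^ (-(α : ℂ))))
      (x₀ := z) (bound := fun t : ℝ => t ^ (1 - α) * Real.exp (-(z.re / 2) * t))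
      (Metric.ball_mem_nhds z hε0) (Eventually.of_forall fun w => aux_aesm α w) (aux_intC h1 hz')
      ((Complex.continuous_ofReal.neg.aestronglyMeasurable).mul (aux_aesm α z)) ?_
      (aux_int_real (by linarith) hε0) ?_
    · exact H.2.differentiableAt.differentiableWithinAt
    · -- bound
      rw [ae_restrict_iff' measurableSet_Ioi]
      filter_upwards with t ht
      intro w hw
      have ht' : (0:ℝ) < t := ht
      have hre : z.re / 2 ≤ w.re := by
        have h1 : |(w - z).re| ≤ ‖w - z‖ := Complex.abs_re_le_norm _
        have h2 : ‖w - z‖ < z.re / 2 := by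
          simpa [Complex.dist_eq] using mem_ball_iff_norm.mp hw
        have h3 : |w.re - z.re| < z.re / 2 := by
          simpa [Complex.sub_re] using h1.trans_lt h2
        have := abs_lt.mp h3
        linarith [this.1]
      rw [norm_mul, aux_norm ht']
      have hnt : ‖-(t : ℂ)‖ = t := by
        rw [norm_neg, Complex.norm_real, Real.norm_eq_abs, abs_of_pos ht']
      rw [hnt]
      have e1 : t * (t ^ (-α) * Real.exp (-w.re * t)) = t ^ (1 - α) * Real.exp (-w.re * t) := by
        rw [show (1:ℝ) - α = 1 + -α by ring, Real.rpow_add ht', Real.rpow_one]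
        ring
      rw [e1]
      have : Real.exp (-w.re * t) ≤ Real.exp (-(z.re / 2) * t) := by
        apply Real.exp_le_exp.2
        nlinarith
      exact mul_le_mul_of_nonneg_left this (Real.rpow_nonneg ht'.le _)
    · -- derivative
      filter_upwards with t
      intro w hw
      have h1 : HasDerivAt (fun w : ℂ => -w * (t : ℂ)) (-(t : ℂ)) w := by
        simpa using ((hasDerivAt_id w).neg.mul_const ((t : ℂ)))
      have h2 := (h1.cexp).mul_const ((t : ℂ) ^ (-(α : ℂ)))
      exact h2.congr_deriv (by ring)
  -- differentiability of g
  have hgd : DifferentiableOn ℂ g {z : ℂ | 0 < z.re} := by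
    intro z hz
    have hslit : z ∈ Complex.slitPlane := Or.inl hz
    exact (((hasDerivAt_id z).cpow_const hslit).differentiableAt.const_mul
      _).differentiableWithinAt
  -- equality on positive reals
  have hreal : ∀ r : ℝ, 0 < r → f r = g r := by
    intro r hr
    have ha : (0:ℝ) < (1 - (α : ℂ)).re := by simp; linarith
    have hI := Complex.integral_cpow_mul_exp_neg_mul_Ioi (a := 1 - (α : ℂ)) ha hr
    rw [show (1 : ℂ) - (α : ℂ) - 1 = -(α : ℂ) by ring] at hI
    have e1 : f r = ∫ t in Ioi (0:ℝ), (t : ℂ) ^ (-(α : ℂ)) * Complex.exp (-((r : ℂ) * t)) := by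
      rw [hf]
      refine setIntegral_congr_fun measurableSet_Ioi fun t ht => ?_
      rw [← neg_mul, mul_comm]
    rw [e1, hI, hg]
    have harg : Complex.arg (r : ℂ) ≠ Real.pi := by
      rw [Complex.arg_ofReal_of_nonneg hr.le]
      exact fun h => Real.pi_ne_zero h.symm
    rw [one_div, Complex.inv_cpow _ _ harg, ← Complex.cpow_neg, neg_sub, mul_comm]
  -- identity theorem
  have hfa := hfd.analyticOnNhd hUopen
  have hga := hgd.analyticOnNhd hUopen
  have h1U : (1 : ℂ) ∈ {z : ℂ | 0 < z.re} := by norm_num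
  have htd : Tendsto (fun n : ℕ => ((1 + 1 / ((n : ℝ) + 1) : ℝ) : ℂ)) atTop (𝓝[≠] (1 : ℂ)) := by
    apply tendsto_nhdsWithin_of_tendsto_nhds_of_eventually_within
    · have h := tendsto_one_div_add_atTop_nhds_zero_nat (𝕜 := ℝ)
      have h2 : Tendsto (fun n : ℕ => (1 + 1 / ((n : ℝ) + 1) : ℝ)) atTop (𝓝 1) := by
        simpa using tendsto_const_nhds.add h
      have h3 := (Complex.continuous_ofReal.tendsto 1).comp h2
      simpa [Function.comp_def] using h3
    · refine Eventually.of_forall fun n => ?_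
      have hpos : (0:ℝ) < 1 / ((n : ℝ) + 1) := by positivity
      simp only [mem_compl_iff, mem_singleton_iff]
      intro hcon
      rw [show (1 : ℂ) = ((1 : ℝ) : ℂ) by norm_num, Complex.ofReal_inj] at hcon
      linarith
  have hfreq : ∃ᶠ z in 𝓝[≠] (1 : ℂ), f z = g z :=
    htd.frequently (Frequently.of_forall fun n => hreal _ (by positivity))
  exact hfa.eqOn_of_preconnected_of_frequently_eq hga hUconn h1U hfreq hp

private lemma aux_sec (μ : ℝ → ℝ) (p : ℂ) {α : ℝ} (hα : α ∈ Ioo (0:ℝ) 1) :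
    (fun t : ℝ => Complex.exp (-p * t) * ((μ α * (t ^ (-α) / Real.Gamma (1 - α)) : ℝ) : ℂ))
      =ᵐ[volume.restrict (Ioi 0)]
    fun t : ℝ => ((μ α / Real.Gamma (1 - α) : ℝ) : ℂ) *
      (Complex.exp (-p * t) * (t : ℂ) ^ (-(α : ℂ))) := by
  filter_upwards [ae_restrict_mem measurableSet_Ioi] with t ht
  rw [show (-(α : ℂ)) = ((-α : ℝ) : ℂ) by push_cast; ring, ← Complex.ofReal_cpow (le_of_lt ht)]
  push_cast
  ring

/-- for a non-negative weight `μ ∈ L^∞(0,1)` (essential bound `M`) and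
`Re p > 0`, the function `(t,α) ↦ e^(-pt) μ(α) t^(-α)/Γ(1-α)` is absolutely integrable
on `(0,∞) × (0,1)`, and the Laplace transform of the distributed-order kernel
`K(t) = ∫₀¹ μ(α) t^(-α)/Γ(1-α) dα` equals `∫₀¹ μ(α) p^(α-1) dα` (principal branch). -/
theorem stmt_4 (μ : ℝ → ℝ) (hmeas : Measurable μ) (M : ℝ)
    (hμ : ∀ᵐ α ∂(volume.restrict (Ioo (0:ℝ) 1)), 0 ≤ μ α ∧ μ α ≤ M)
    (p : ℂ) (hp : 0 < p.re) :
    Integrable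
      (fun q : ℝ × ℝ =>
        Complex.exp (-p * q.1) * ((μ q.2 * (q.1 ^ (-q.2) / Real.Gamma (1 - q.2)) : ℝ) : ℂ))
      ((volume.restrict (Ioi (0:ℝ))).prod (volume.restrict (Ioo (0:ℝ) 1))) ∧
    ∫ t in Ioi (0:ℝ),
        Complex.exp (-p * t) *
          ((∫ α in Ioo (0:ℝ) 1, μ α * (t ^ (-α) / Real.Gamma (1 - α)) : ℝ) : ℂ)
      = ∫ α in Ioo (0:ℝ) 1, (μ α : ℂ) * p ^ ((α : ℂ) - 1) := by
  have hΓpos : ∀ α ∈ Ioo (0:ℝ) 1, 0 < Real.Gamma (1 - α) := fun α hα =>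
    Real.Gamma_pos_of_pos (by linarith [hα.2])
  -- continuity of Gamma on the interval
  have hGc : ContinuousOn (fun α : ℝ => Real.Gamma (1 - α)) (Ioo 0 1) := by
    intro x hx
    have h1x : (0:ℝ) < 1 - x := by linarith [hx.2]
    have hne : ∀ m : ℕ, (1 - x) ≠ -(m : ℝ) := by
      intro m h
      have : (0:ℝ) ≤ (m : ℝ) := Nat.cast_nonneg m
      rw [h] at h1x; linarith
    exact ((Real.differentiableAt_Gamma hne).continuousAt.comp
      ((continuous_const.sub continuous_id).continuousAt)).continuousWithinAt
  have hψ : AEMeasurable (fun α : ℝ => μ α / Real.Gamma (1 - α))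
      (volume.restrict (Ioo (0:ℝ) 1)) :=
    hmeas.aemeasurable.div (hGc.aemeasurable measurableSet_Ioo)
  -- a.e. positivity of the first coordinate
  have hfst : ∀ᵐ q : ℝ × ℝ
      ∂((volume.restrict (Ioi (0:ℝ))).prod (volume.restrict (Ioo (0:ℝ) 1))), 0 < q.1 :=
    Measure.quasiMeasurePreserving_fst.ae (ae_restrict_mem measurableSet_Ioi)
  -- measurability of the integrand on the product
  have hF_aesm : AEStronglyMeasurable
      (fun q : ℝ × ℝ =>
        Complex.exp (-p * q.1) * ((μ q.2 * (q.1 ^ (-q.2) / Real.Gamma (1 - q.2)) : ℝ) : ℂ))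
      ((volume.restrict (Ioi (0:ℝ))).prod (volume.restrict (Ioo (0:ℝ) 1))) := by
    have hG : AEStronglyMeasurable
        (fun q : ℝ × ℝ => Complex.exp (-p * q.1) *
          (((Real.exp (Real.log q.1 * (-q.2)) : ℝ) : ℂ) *
            ((μ q.2 / Real.Gamma (1 - q.2) : ℝ) : ℂ)))
        ((volume.restrict (Ioi (0:ℝ))).prod (volume.restrict (Ioo (0:ℝ) 1))) := by
      refine AEStronglyMeasurable.mul ?_ (AEStronglyMeasurable.mul ?_ ?_)
      · exact (Complex.continuous_exp.comp (continuous_const.mul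
          (Complex.continuous_ofReal.comp continuous_fst))).aestronglyMeasurable
      · exact (Complex.measurable_ofReal.comp (Real.measurable_exp.comp
          ((Real.measurable_log.comp measurable_fst).mul
            measurable_snd.neg))).aestronglyMeasurable
      · have h1 : AEMeasurable (fun q : ℝ × ℝ => μ q.2 / Real.Gamma (1 - q.2))
            ((volume.restrict (Ioi (0:ℝ))).prod (volume.restrict (Ioo (0:ℝ) 1))) :=
          hψ.comp_quasiMeasurePreserving Measure.quasiMeasurePreserving_snd
        exact (Complex.measurable_ofReal.comp_aemeasurable h1).aestronglyMeasurable
    refine hG.congr ?_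
    filter_upwards [hfst] with q hq
    rw [Real.rpow_def_of_pos hq]
    push_cast
    ring
  -- integrability of sections in t
  have hInt1 : ∀ᵐ α ∂(volume.restrict (Ioo (0:ℝ) 1)),
      Integrable (fun t : ℝ =>
        Complex.exp (-p * t) * ((μ α * (t ^ (-α) / Real.Gamma (1 - α)) : ℝ) : ℂ))
        (volume.restrict (Ioi (0:ℝ))) := by
    filter_upwards [ae_restrict_mem measurableSet_Ioo] with α hα
    exact (((aux_intC hα.2 hp).const_mul _)).congr (aux_sec μ p hα).symm
  -- value of the norm integral in t
  have hnormint : ∀ α ∈ Ioo (0:ℝ) 1, 0 ≤ μ α →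
      ∫ t in Ioi (0:ℝ),
        ‖Complex.exp (-p * t) * ((μ α * (t ^ (-α) / Real.Gamma (1 - α)) : ℝ) : ℂ)‖
      = μ α * (1 / p.re) ^ (1 - α) := by
    intro α hα hμα
    have hΓ := hΓpos α hα
    have heq : (fun t : ℝ =>
        ‖Complex.exp (-p * t) * ((μ α * (t ^ (-α) / Real.Gamma (1 - α)) : ℝ) : ℂ)‖)
        =ᵐ[volume.restrict (Ioi 0)]
        fun t : ℝ => (μ α / Real.Gamma (1 - α)) * (t ^ ((1 - α) - 1) * Real.exp (-(p.re * t))) := by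
      filter_upwards [ae_restrict_mem measurableSet_Ioi] with t ht
      have ht' : (0:ℝ) < t := ht
      rw [norm_mul, Complex.norm_exp,
        Complex.norm_real, Real.norm_eq_abs,
        _root_.abs_of_nonneg (by positivity : (0:ℝ) ≤ μ α * (t ^ (-α) / Real.Gamma (1 - α))),
        show (1 : ℝ) - α - 1 = -α by ring]
      have : (-p * (t : ℂ)).re = -(p.re * t) := by simp
      rw [this]
      ring
    rw [integral_congr_ae heq, integral_const_mul,
      Real.integral_rpow_mul_exp_neg_mul_Ioi (by linarith [hα.2]) hp]
    field_simp
  -- integrability of the norm integrals in α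
  have hInt2 : Integrable (fun α : ℝ =>
      ∫ t in Ioi (0:ℝ),
        ‖Complex.exp (-p * t) * ((μ α * (t ^ (-α) / Real.Gamma (1 - α)) : ℝ) : ℂ)‖)
      (volume.restrict (Ioo (0:ℝ) 1)) := by
    refine Integrable.mono' (integrable_const (max M 0 * max 1 p.re⁻¹))
      (hF_aesm.norm.prod_swap.integral_prod_right') ?_
    filter_upwards [hμ, ae_restrict_mem measurableSet_Ioo] with α hμα hα
    rw [Real.norm_eq_abs, _root_.abs_of_nonneg (integral_nonneg fun t => norm_nonneg _),
      hnormint α hα hμα.1]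
    have hb1 : (1 / p.re) ^ (1 - α) ≤ max 1 p.re⁻¹ := by
      rcases le_or_gt 1 p.re with hb | hb
      · refine le_trans (Real.rpow_le_one (by positivity) ?_ (by linarith [hα.2])) (le_max_left _ _)
        rw [div_le_one hp]; exact hb
      · have h1b : 1 ≤ 1 / p.re := by rw [le_div_iff₀ hp]; linarith
        have := Real.rpow_le_rpow_of_exponent_le h1b
          (show (1:ℝ) - α ≤ 1 by linarith [hα.1])
        rw [Real.rpow_one] at this
        exact this.trans (by rw [one_div]; exact le_max_right _ _)
    have hM : μ α ≤ max M 0 := le_trans hμα.2 (le_max_left _ _)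
    exact mul_le_mul hM hb1 (Real.rpow_nonneg (by positivity) _) (le_max_right M 0)
  have hprod : Integrable
      (fun q : ℝ × ℝ =>
        Complex.exp (-p * q.1) * ((μ q.2 * (q.1 ^ (-q.2) / Real.Gamma (1 - q.2)) : ℝ) : ℂ))
      ((volume.restrict (Ioi (0:ℝ))).prod (volume.restrict (Ioo (0:ℝ) 1))) :=
    (integrable_prod_iff' hF_aesm).mpr ⟨hInt1, hInt2⟩
  refine ⟨hprod, ?_⟩
  calc
    ∫ t in Ioi (0:ℝ), Complex.exp (-p * t) *
        ((∫ α in Ioo (0:ℝ) 1, μ α * (t ^ (-α) / Real.Gamma (1 - α)) : ℝ) : ℂ)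
      = ∫ t in Ioi (0:ℝ), ∫ α in Ioo (0:ℝ) 1,
          Complex.exp (-p * t) * ((μ α * (t ^ (-α) / Real.Gamma (1 - α)) : ℝ) : ℂ) := by
        refine integral_congr_ae (Eventually.of_forall fun t => ?_)
        simp only [integral_const_mul]
        congr 1
        exact (integral_ofReal (𝕜 := ℂ)).symm
    _ = ∫ α in Ioo (0:ℝ) 1, ∫ t in Ioi (0:ℝ),
          Complex.exp (-p * t) * ((μ α * (t ^ (-α) / Real.Gamma (1 - α)) : ℝ) : ℂ) :=
        integral_integral_swap hprod
    _ = ∫ α in Ioo (0:ℝ) 1, (μ α : ℂ) * p ^ ((α : ℂ) - 1) := by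
        refine integral_congr_ae ?_
        filter_upwards [ae_restrict_mem measurableSet_Ioo] with α hα
        rw [integral_congr_ae (aux_sec μ p hα), integral_const_mul,
          key_laplace hα.1 hα.2 hp]
        have hΓ := hΓpos α hα
        have hΓc : Complex.Gamma (1 - (α : ℂ)) = ((Real.Gamma (1 - α) : ℝ) : ℂ) := by
          rw [← Complex.Gamma_ofReal]
          push_cast
          ring_nf
        rw [hΓc, ← mul_assoc]
        congr 1
        rw [Complex.ofReal_div, div_mul_eq_mul_div,
          mul_div_assoc, div_self (Complex.ofReal_ne_zero.mpr hΓ.ne'), mul_one]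
end

section
/- Let k : (0,∞) → [0,∞) be measurable with k restricted to (0,1) in L¹ and k restricted to (1,∞) in L^∞. Let m ∈ ℕ, M ≥ 0, and let φ : [0,∞) → [0,∞) be measurable with (1+t)^{m+2} φ(t) ≤ M for all t ≥ 0. Then for every t ≥ 0, (1+t)^m ∫₀^∞ k(s) φ(t+s) ds ≤ (‖k‖_{L¹(0,1)} + ‖k‖_{L^∞(1,∞)}) · M. -/
open MeasureTheory Set

/-- weighted estimate. If `k ≥ 0` is measurable, integrable on `(0,1)` and
essentially bounded by `B` on `(1,∞)`, and `φ ≥ 0` is measurable with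
`(1+t)^(m+2) φ(t) ≤ M` for all `t ≥ 0`, then for every `t ≥ 0` the function
`s ↦ k(s) φ(t+s)` is integrable on `(0,∞)` and
`(1+t)^m ∫₀^∞ k(s) φ(t+s) ds ≤ (‖k‖_{L¹(0,1)} + B) M`. -/
theorem stmt_6 (k : ℝ → ℝ) (hkmeas : Measurable k) (hknn : ∀ s : ℝ, 0 < s → 0 ≤ k s)
    (hk1 : IntegrableOn k (Ioo 0 1)) (B : ℝ)
    (hkB : ∀ᵐ s ∂(volume.restrict (Ioi (1:ℝ))), k s ≤ B)
    (m : ℕ) (M : ℝ) (hM : 0 ≤ M)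
    (φ : ℝ → ℝ) (hφmeas : Measurable φ) (hφnn : ∀ t : ℝ, 0 ≤ t → 0 ≤ φ t)
    (hφ : ∀ t : ℝ, 0 ≤ t → (1 + t) ^ (m + 2) * φ t ≤ M) :
    ∀ t : ℝ, 0 ≤ t →
      IntegrableOn (fun s : ℝ => k s * φ (t + s)) (Ioi 0) ∧
      (1 + t) ^ m * ∫ s in Ioi (0:ℝ), k s * φ (t + s)
        ≤ ((∫ s in Ioo (0:ℝ) 1, k s) + B) * M := by
  intro t ht
  have h1t : (0:ℝ) < 1 + t := by linarith
  -- φ bound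
  have hφb : ∀ u : ℝ, 0 ≤ u → φ u ≤ M / (1 + u) ^ (m + 2) := by
    intro u hu
    rw [le_div_iff₀ (by positivity)]
    calc φ u * (1 + u) ^ (m + 2) = (1 + u) ^ (m + 2) * φ u := by ring
      _ ≤ M := hφ u hu
  -- B ≥ 0
  have hB : 0 ≤ B := by
    have hne : volume.restrict (Ioi (1:ℝ)) ≠ 0 := by
      rw [Ne, Measure.restrict_eq_zero]
      simp [Real.volume_Ioi]
    have : ∀ᵐ s ∂(volume.restrict (Ioi (1:ℝ))), (0:ℝ) ≤ B := by
      filter_upwards [hkB, ae_restrict_mem measurableSet_Ioi] with s hs hs1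
      have h1s : (1:ℝ) < s := hs1
      exact (hknn s (by linarith)).trans hs
    obtain ⟨s, hs⟩ := (ae_neBot.mpr hne).nonempty_of_mem this
    exact hs
  have hmeasg : Measurable (fun s : ℝ => k s * φ (t + s)) :=
    hkmeas.mul (hφmeas.comp (measurable_const_add t))
  -- integrability on Ioo 0 1
  have hI1 : IntegrableOn (fun s : ℝ => k s * φ (t + s)) (Ioo 0 1) := by
    apply Integrable.mono' (hk1.mul_const M) hmeasg.aestronglyMeasurable.restrict
    filter_upwards [ae_restrict_mem measurableSet_Ioo] with s hs
    have hs0 : 0 < s := hs.1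
    have hts : 0 ≤ t + s := by linarith
    rw [Real.norm_eq_abs, abs_of_nonneg (mul_nonneg (hknn s hs0) (hφnn _ hts))]
    have hφM : φ (t + s) ≤ M := by
      refine (hφb _ hts).trans ?_
      exact div_le_self hM (one_le_pow₀ (by linarith))
    exact mul_le_mul_of_nonneg_left hφM (hknn s hs0)
  -- integrability on Ioi 1
  have hint2 : IntegrableOn (fun s : ℝ => B * M * s ^ (-2 : ℝ)) (Ioi 1) :=
    (integrableOn_Ioi_rpow_of_lt (by norm_num) one_pos).const_mul (B * M)
  have hbound2 : ∀ᵐ s ∂(volume.restrict (Ioi (1:ℝ))),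
      (1 + t) ^ m * (k s * φ (t + s)) ≤ B * M * s ^ (-2 : ℝ) := by
    filter_upwards [hkB, ae_restrict_mem measurableSet_Ioi] with s hs hs1
    have h1s : (1:ℝ) < s := hs1
    have hs0 : (0:ℝ) < s := by linarith
    have hts : 0 ≤ t + s := by linarith
    have hrp : s ^ (-2 : ℝ) = ((s : ℝ) ^ (2:ℕ))⁻¹ := by
      rw [show (-2:ℝ) = -((2:ℕ):ℝ) by norm_num, Real.rpow_neg hs0.le, Real.rpow_natCast]
    have key : (1 + t) ^ m * M / (1 + (t + s)) ^ (m + 2) ≤ M / s ^ (2:ℕ) := by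
      rw [div_le_div_iff₀ (by positivity) (by positivity)]
      have h1 : (1 + t) ^ m ≤ (1 + (t + s)) ^ m :=
        pow_le_pow_left₀ (by linarith) (by linarith) m
      have h2 : s ^ (2:ℕ) ≤ (1 + (t + s)) ^ (2:ℕ) :=
        pow_le_pow_left₀ hs0.le (by linarith) 2
      calc (1 + t) ^ m * M * s ^ (2:ℕ)
          ≤ (1 + (t + s)) ^ m * M * (1 + (t + s)) ^ (2:ℕ) := by
            apply mul_le_mul (mul_le_mul_of_nonneg_right h1 hM) h2 (by positivity) (by positivity)
        _ = M * (1 + (t + s)) ^ (m + 2) := by ring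
    have hφb' : φ (t + s) ≤ M / (1 + (t + s)) ^ (m + 2) := hφb _ hts
    calc (1 + t) ^ m * (k s * φ (t + s))
        ≤ (1 + t) ^ m * (B * (M / (1 + (t + s)) ^ (m + 2))) := by
          apply mul_le_mul_of_nonneg_left _ (by positivity)
          apply mul_le_mul hs hφb' (hφnn _ hts) hB
      _ = B * ((1 + t) ^ m * M / (1 + (t + s)) ^ (m + 2)) := by ring
      _ ≤ B * (M / s ^ (2:ℕ)) := mul_le_mul_of_nonneg_left key hB
      _ = B * M * s ^ (-2 : ℝ) := by rw [hrp]; ring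
  have hI2 : IntegrableOn (fun s : ℝ => k s * φ (t + s)) (Ioi 1) := by
    have : IntegrableOn (fun s : ℝ => (1 + t) ^ m * (k s * φ (t + s))) (Ioi 1) := by
      apply Integrable.mono' hint2
        ((hmeasg.const_mul _).aestronglyMeasurable.restrict)
      filter_upwards [hbound2, ae_restrict_mem measurableSet_Ioi] with s hs hs1
      have h1s : (1:ℝ) < s := hs1
      have hs0 : (0:ℝ) < s := by linarith
      have hnn : 0 ≤ (1 + t) ^ m * (k s * φ (t + s)) :=
        mul_nonneg (by positivity) (mul_nonneg (hknn s hs0) (hφnn _ (by linarith)))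
      rw [Real.norm_eq_abs, abs_of_nonneg hnn]
      exact hs
    have := this.const_mul ((1 + t) ^ m)⁻¹
    simpa [IntegrableOn, mul_assoc, inv_mul_cancel_left₀ (by positivity : ((1:ℝ) + t) ^ m ≠ 0)] using
      this
  have hIoc : IntegrableOn (fun s : ℝ => k s * φ (t + s)) (Ioc 0 1) :=
    (integrableOn_Ioc_iff_integrableOn_Ioo enorm_ne_top).mpr hI1
  have hunion : Ioc (0:ℝ) 1 ∪ Ioi 1 = Ioi 0 := Ioc_union_Ioi_eq_Ioi (by norm_num)
  have hIall : IntegrableOn (fun s : ℝ => k s * φ (t + s)) (Ioi 0) := by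
    rw [← hunion]; exact hIoc.union hI2
  refine ⟨hIall, ?_⟩
  have hsplit : (∫ s in Ioi (0:ℝ), k s * φ (t + s))
      = (∫ s in Ioo (0:ℝ) 1, k s * φ (t + s)) + ∫ s in Ioi (1:ℝ), k s * φ (t + s) := by
    rw [← integral_Ioc_eq_integral_Ioo, ← hunion,
      setIntegral_union (Ioc_disjoint_Ioi le_rfl) measurableSet_Ioi hIoc hI2]
  -- first piece
  have hknnI : 0 ≤ ∫ s in Ioo (0:ℝ) 1, k s :=
    setIntegral_nonneg measurableSet_Ioo (fun s hs => hknn s hs.1)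
  have hfirst : (1 + t) ^ m * ∫ s in Ioo (0:ℝ) 1, k s * φ (t + s)
      ≤ (∫ s in Ioo (0:ℝ) 1, k s) * M := by
    have hmono : (∫ s in Ioo (0:ℝ) 1, k s * φ (t + s))
        ≤ ∫ s in Ioo (0:ℝ) 1, k s * (M / (1 + t) ^ (m + 2)) := by
      apply setIntegral_mono_on hI1 (hk1.mul_const _) measurableSet_Ioo
      intro s hs
      have hs0 : 0 < s := hs.1
      have hts : 0 ≤ t + s := by linarith
      refine mul_le_mul_of_nonneg_left ((hφb _ hts).trans ?_) (hknn s hs0)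
      exact div_le_div_of_nonneg_left hM (by positivity)
        (pow_le_pow_left₀ (by linarith) (by linarith) _)
    rw [MeasureTheory.integral_mul_const] at hmono
    calc (1 + t) ^ m * ∫ s in Ioo (0:ℝ) 1, k s * φ (t + s)
        ≤ (1 + t) ^ m * ((∫ s in Ioo (0:ℝ) 1, k s) * (M / (1 + t) ^ (m + 2))) :=
          mul_le_mul_of_nonneg_left hmono (by positivity)
      _ = (∫ s in Ioo (0:ℝ) 1, k s) * M * ((1 + t) ^ m / (1 + t) ^ (m + 2)) := by ring
      _ ≤ (∫ s in Ioo (0:ℝ) 1, k s) * M * 1 := by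
          apply mul_le_mul_of_nonneg_left _ (mul_nonneg hknnI hM)
          rw [div_le_one (by positivity)]
          exact pow_le_pow_right₀ (by linarith) (by omega)
      _ = (∫ s in Ioo (0:ℝ) 1, k s) * M := by ring
  -- second piece
  have hsecond : (1 + t) ^ m * ∫ s in Ioi (1:ℝ), k s * φ (t + s) ≤ B * M := by
    rw [← MeasureTheory.integral_const_mul]
    calc (∫ s in Ioi (1:ℝ), (1 + t) ^ m * (k s * φ (t + s)))
        ≤ ∫ s in Ioi (1:ℝ), B * M * s ^ (-2 : ℝ) :=
          integral_mono_ae (hI2.const_mul _) hint2 hbound2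
      _ = B * M * ∫ s in Ioi (1:ℝ), s ^ (-2 : ℝ) := MeasureTheory.integral_const_mul _ _
      _ = B * M := by
          rw [integral_Ioi_rpow_of_lt (by norm_num) one_pos]
          norm_num
  rw [hsplit]
  calc (1 + t) ^ m * ((∫ s in Ioo (0:ℝ) 1, k s * φ (t + s)) + ∫ s in Ioi (1:ℝ), k s * φ (t + s))
      = (1 + t) ^ m * (∫ s in Ioo (0:ℝ) 1, k s * φ (t + s))
        + (1 + t) ^ m * ∫ s in Ioi (1:ℝ), k s * φ (t + s) := by ring
    _ ≤ (∫ s in Ioo (0:ℝ) 1, k s) * M + B * M := add_le_add hfirst hsecond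
    _ = ((∫ s in Ioo (0:ℝ) 1, k s) + B) * M := by ring
end
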